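/- arXiv:1105.4121 — 2 statements merged into one kernel-verified Lean document; each statement's English description precedes it below -/
import Mathlib

section
/- Let R ⊆ S be a ring extension with S = R·C_S(R) (a centralizing extension), where C_S(R) is the centralizer of R in S. Then for every prime ideal P of S, the contraction P ∩ R is a prime ideal of R. -/
open Pointwise

/-- A two-sided ideal of a (possibly noncommutative) ring, as a subset. -/
structure IsTwoSidedIdealSet (R : Type*) [Ring R] (I : Set R) : Prop where
  zero_mem : (0 : R) ∈ I
  add_mem : ∀ ⦃a b : R⦄, a ∈ I → b ∈ I → a + b ∈ I
  neg_mem : ∀ ⦃a : R⦄, a ∈ I → -a ∈ I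
  mul_mem_left : ∀ (r : R) ⦃a : R⦄, a ∈ I → r * a ∈ I
  mul_mem_right : ∀ (r : R) ⦃a : R⦄, a ∈ I → a * r ∈ I

/-- A prime two-sided ideal of `S`. -/
def IsPrimeTI (S : Type*) [Ring S] (P : Set S) : Prop :=
  IsTwoSidedIdealSet S P ∧ P ≠ Set.univ ∧
    ∀ A B : Set S, IsTwoSidedIdealSet S A → IsTwoSidedIdealSet S B →
      (∀ a ∈ A, ∀ b ∈ B, a * b ∈ P) → A ⊆ P ∨ B ⊆ P

/-- A two-sided ideal of the subring `R'` of `S`, realized as a subset of `S`. -/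
def IsTIof {S : Type*} [Ring S] (R' : Subring S) (I : Set S) : Prop :=
  I ⊆ (R' : Set S) ∧ (0 : S) ∈ I ∧ (∀ a ∈ I, ∀ b ∈ I, a + b ∈ I) ∧ (∀ a ∈ I, -a ∈ I) ∧
    ∀ r ∈ R', ∀ a ∈ I, r * a ∈ I ∧ a * r ∈ I

/-- A prime two-sided ideal of the subring `R'` of `S`. -/
def IsPrimeTIof {S : Type*} [Ring S] (R' : Subring S) (I : Set S) : Prop :=
  IsTIof R' I ∧ I ≠ (R' : Set S) ∧
    ∀ A B : Set S, IsTIof R' A → IsTIof R' B →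
      (∀ a ∈ A, ∀ b ∈ B, a * b ∈ I) → A ⊆ I ∨ B ⊆ I

section Aux

variable {S : Type*} [Ring S] (R' : Subring S)

/-- The extension of an ideal `A` of `R'` to `S` along a centralizing extension:
the additive group generated by products `a * c` with `a ∈ A` and `c` in the
centralizer of `R'`. -/
def extIdeal (A : Set S) : AddSubgroup S :=
  AddSubgroup.closure {x : S | ∃ a ∈ A, ∃ c ∈ Subring.centralizer (R' : Set S), x = a * c}

theorem subset_extIdeal {A : Set S} : A ⊆ (extIdeal R' A : Set S) := fun a ha => by
  have : a = a * 1 := (mul_one a).symm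
  rw [this]
  exact AddSubgroup.subset_closure ⟨a, ha, 1, one_mem _, rfl⟩

theorem extIdeal_isTwoSided
    (hcen : ∀ s : S, s ∈ AddSubgroup.closure
      {x : S | ∃ r ∈ R', ∃ c ∈ Subring.centralizer (R' : Set S), x = r * c})
    {A : Set S} (hA : IsTIof R' A) :
    IsTwoSidedIdealSet S (extIdeal R' A : Set S) := by
  obtain ⟨hAsub, _, _, _, hAmul⟩ := hA
  constructor
  · exact (extIdeal R' A).zero_mem
  · exact fun a b ha hb => (extIdeal R' A).add_mem ha hb
  · exact fun a ha => (extIdeal R' A).neg_mem ha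
  · -- left multiplication
    intro s x hx
    induction hx using AddSubgroup.closure_induction with
    | mem x hxmem =>
      obtain ⟨a, ha, c, hc, rfl⟩ := hxmem
      -- induct on s
      induction hcen s using AddSubgroup.closure_induction with
      | mem y hy =>
        obtain ⟨r, hr, c', hc', rfl⟩ := hy
        have hca : c' * a = a * c' :=
          (Subring.mem_centralizer_iff.mp hc' a (hAsub ha)).symm
        have : r * c' * (a * c) = (r * a) * (c' * c) := by
          rw [mul_assoc r c' (a * c), ← mul_assoc c' a c, hca, mul_assoc a c' c,
            ← mul_assoc r a (c' * c)]
        rw [this]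
        exact AddSubgroup.subset_closure
          ⟨r * a, (hAmul r hr a ha).1, c' * c, mul_mem hc' hc, rfl⟩
      | zero => rw [zero_mul]; exact (extIdeal R' A).zero_mem
      | add y z _ _ hy hz => rw [add_mul]; exact (extIdeal R' A).add_mem hy hz
      | neg y _ hy => rw [neg_mul]; exact (extIdeal R' A).neg_mem hy
    | zero => rw [mul_zero]; exact (extIdeal R' A).zero_mem
    | add y z _ _ hy hz => rw [mul_add]; exact (extIdeal R' A).add_mem hy hz
    | neg y _ hy => rw [mul_neg]; exact (extIdeal R' A).neg_mem hy
  · -- right multiplication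
    intro s x hx
    induction hx using AddSubgroup.closure_induction with
    | mem x hxmem =>
      obtain ⟨a, ha, c, hc, rfl⟩ := hxmem
      induction hcen s using AddSubgroup.closure_induction with
      | mem y hy =>
        obtain ⟨r, hr, c', hc', rfl⟩ := hy
        have hcr : r * c = c * r := Subring.mem_centralizer_iff.mp hc r hr
        have : (a * c) * (r * c') = (a * r) * (c * c') := by
          rw [mul_assoc a c (r * c'), ← mul_assoc c r c', ← hcr, mul_assoc r c c',
            ← mul_assoc a r (c * c')]
        rw [this]
        exact AddSubgroup.subset_closure
          ⟨a * r, (hAmul r hr a ha).2, c * c', mul_mem hc hc', rfl⟩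
      | zero => rw [mul_zero]; exact (extIdeal R' A).zero_mem
      | add y z _ _ hy hz => rw [mul_add]; exact (extIdeal R' A).add_mem hy hz
      | neg y _ hy => rw [mul_neg]; exact (extIdeal R' A).neg_mem hy
    | zero => rw [zero_mul]; exact (extIdeal R' A).zero_mem
    | add y z _ _ hy hz => rw [add_mul]; exact (extIdeal R' A).add_mem hy hz
    | neg y _ hy => rw [neg_mul]; exact (extIdeal R' A).neg_mem hy

end Aux

/-- let `R ⊆ S` be a centralizing ring extension, i.e.
`S = R·C_S(R)` (every element of `S` is a finite sum of products `r*c` with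
`r ∈ R` and `c` centralizing `R`).  Then for every prime two-sided ideal `P` of
`S`, the contraction `P ∩ R` is a prime two-sided ideal of `R`. -/
theorem contraction_prime_of_centralizing {S : Type*} [Ring S] (R' : Subring S)
    (hcen : ∀ s : S, s ∈ AddSubgroup.closure
      {x : S | ∃ r ∈ R', ∃ c ∈ Subring.centralizer (R' : Set S), x = r * c})
    (P : Set S) (hP : IsPrimeTI S P) :
    IsPrimeTIof R' (P ∩ (R' : Set S)) := by
  obtain ⟨hPI, hPne, hPprime⟩ := hP
  refine ⟨?_, ?_, ?_⟩
  · -- ideal of R'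
    refine ⟨Set.inter_subset_right, ⟨hPI.zero_mem, zero_mem _⟩, ?_, ?_, ?_⟩
    · rintro a ⟨haP, haR⟩ b ⟨hbP, hbR⟩
      exact ⟨hPI.add_mem haP hbP, add_mem haR hbR⟩
    · rintro a ⟨haP, haR⟩
      exact ⟨hPI.neg_mem haP, neg_mem haR⟩
    · rintro r hr a ⟨haP, haR⟩
      exact ⟨⟨hPI.mul_mem_left r haP, mul_mem hr haR⟩,
             ⟨hPI.mul_mem_right r haP, mul_mem haR hr⟩⟩
  · -- proper
    intro h
    apply hPne
    have h1 : (1 : S) ∈ P ∩ (R' : Set S) := by rw [h]; exact one_mem R'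
    ext s
    simp only [Set.mem_univ, iff_true]
    have := hPI.mul_mem_left s h1.1
    rwa [mul_one] at this
  · -- primeness
    intro A B hA hB hAB
    have hprod : ∀ x ∈ (extIdeal R' A : Set S), ∀ y ∈ (extIdeal R' B : Set S), x * y ∈ P := by
      intro x hx y hy
      induction hx using AddSubgroup.closure_induction with
      | mem x hxmem =>
        obtain ⟨a, ha, c, hc, rfl⟩ := hxmem
        induction hy using AddSubgroup.closure_induction with
        | mem y hymem =>
          obtain ⟨b, hb, c', hc', rfl⟩ := hymem
          have hcb : c * b = b * c := (Subring.mem_centralizer_iff.mp hc b (hB.1 hb)).symm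
          have : (a * c) * (b * c') = ((a * b) * c) * c' := by
            rw [mul_assoc a c (b * c'), ← mul_assoc c b c', hcb, mul_assoc b c c',
              ← mul_assoc a b (c * c'), mul_assoc (a * b) c c']
          rw [this]
          exact hPI.mul_mem_right c' (hPI.mul_mem_right c (hAB a ha b hb).1)
        | zero => rw [mul_zero]; exact hPI.zero_mem
        | add y z _ _ hy hz => rw [mul_add]; exact hPI.add_mem hy hz
        | neg y _ hy => rw [mul_neg]; exact hPI.neg_mem hy
      | zero => rw [zero_mul]; exact hPI.zero_mem
      | add y z _ _ hy hz => rw [add_mul]; exact hPI.add_mem hy hz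
      | neg y _ hy => rw [neg_mul]; exact hPI.neg_mem hy
    rcases hPprime (extIdeal R' A : Set S) (extIdeal R' B : Set S)
      (extIdeal_isTwoSided R' hcen hA) (extIdeal_isTwoSided R' hcen hB) hprod with h | h
    · left
      exact fun a ha => ⟨h (subset_extIdeal R' ha), hA.1 ha⟩
    · right
      exact fun b hb => ⟨h (subset_extIdeal R' hb), hB.1 hb⟩
end

section
/- Let R ⊆ S be a centralizing ring extension and let G be a group acting by ring automorphisms on S stabilizing R. If I is a G-prime ideal of S, then I ∩ R is a G-prime ideal of R. -/
open Pointwise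

/-- A `G`-prime ideal of `S`: a proper `G`-stable two-sided ideal `I` such that
`A*B ⊆ I` for `G`-stable two-sided ideals `A, B` implies `A ⊆ I` or `B ⊆ I`. -/
def IsGPrime (G S : Type*) [Group G] [Ring S] [MulSemiringAction G S] (I : Set S) : Prop :=
  IsTwoSidedIdealSet S I ∧ I ≠ Set.univ ∧ (∀ g : G, g • I = I) ∧
    ∀ A B : Set S, IsTwoSidedIdealSet S A → IsTwoSidedIdealSet S B →
      (∀ g : G, g • A = A) → (∀ g : G, g • B = B) →
      (∀ a ∈ A, ∀ b ∈ B, a * b ∈ I) → A ⊆ I ∨ B ⊆ I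

/-- A `G`-prime ideal of the subring `R'` of `S` (for a `G`-action on `S`
stabilizing `R'`). -/
def IsGPrimeOf (G : Type*) {S : Type*} [Group G] [Ring S] [MulSemiringAction G S]
    (R' : Subring S) (I : Set S) : Prop :=
  IsTIof R' I ∧ I ≠ (R' : Set S) ∧ (∀ g : G, g • I = I) ∧
    ∀ A B : Set S, IsTIof R' A → IsTIof R' B →
      (∀ g : G, g • A = A) → (∀ g : G, g • B = B) →
      (∀ a ∈ A, ∀ b ∈ B, a * b ∈ I) → A ⊆ I ∨ B ⊆ I

section Aux

variable {G S : Type*} [Group G] [Ring S] [MulSemiringAction G S]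

/-- The additive span of `A·S` inside `S`. -/
def extIdSet (A : Set S) : AddSubgroup S :=
  AddSubgroup.closure {x : S | ∃ a ∈ A, ∃ s : S, x = a * s}

lemma extIdSet_gen {A : Set S} {a : S} (ha : a ∈ A) (s : S) :
    a * s ∈ extIdSet A :=
  AddSubgroup.subset_closure ⟨a, ha, s, rfl⟩

lemma subset_extIdSet {A : Set S} : A ⊆ (extIdSet A : Set S) := by
  intro a ha
  simpa using extIdSet_gen ha 1

lemma extIdSet_mul_right {A : Set S} {x : S} (hx : x ∈ extIdSet A) (t : S) :
    x * t ∈ extIdSet A := by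
  induction hx using AddSubgroup.closure_induction with
  | mem y hy =>
    obtain ⟨a, ha, s, rfl⟩ := hy
    rw [mul_assoc]; exact extIdSet_gen ha _
  | zero => simpa using (extIdSet A).zero_mem
  | add y z _ _ hy hz => rw [add_mul]; exact (extIdSet A).add_mem hy hz
  | neg y _ hy => rw [neg_mul]; exact (extIdSet A).neg_mem hy

lemma extIdSet_mul_left {R' : Subring S}
    (hcen : ∀ s : S, s ∈ AddSubgroup.closure
      {x : S | ∃ r ∈ R', ∃ c ∈ Subring.centralizer (R' : Set S), x = r * c})
    {A : Set S} (hA : IsTIof R' A) {x : S} (hx : x ∈ extIdSet A) (t : S) :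
    t * x ∈ extIdSet A := by
  induction hx using AddSubgroup.closure_induction with
  | mem y hy =>
    obtain ⟨a, ha, s, rfl⟩ := hy
    have ht := hcen t
    induction ht using AddSubgroup.closure_induction with
    | mem u hu =>
      obtain ⟨r, hr, c, hc, rfl⟩ := hu
      have hca : c * a = a * c :=
        (Subring.mem_centralizer_iff.mp hc a (hA.1 ha)).symm
      have : r * c * (a * s) = (r * a) * (c * s) := by
        simp only [mul_assoc]
        rw [← mul_assoc c a s, hca, mul_assoc]
      rw [this]
      exact extIdSet_gen ((hA.2.2.2.2 r hr a ha).1) _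
    | zero => simpa using (extIdSet A).zero_mem
    | add u v _ _ hu hv => rw [add_mul]; exact (extIdSet A).add_mem hu hv
    | neg u _ hu => rw [neg_mul]; exact (extIdSet A).neg_mem hu
  | zero => simpa using (extIdSet A).zero_mem
  | add y z _ _ hy hz => rw [mul_add]; exact (extIdSet A).add_mem hy hz
  | neg y _ hy => rw [mul_neg]; exact (extIdSet A).neg_mem hy

lemma extIdSet_isTwoSided {R' : Subring S}
    (hcen : ∀ s : S, s ∈ AddSubgroup.closure
      {x : S | ∃ r ∈ R', ∃ c ∈ Subring.centralizer (R' : Set S), x = r * c})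
    {A : Set S} (hA : IsTIof R' A) :
    IsTwoSidedIdealSet S (extIdSet A : Set S) where
  zero_mem := (extIdSet A).zero_mem
  add_mem := fun _ _ h h' => (extIdSet A).add_mem h h'
  neg_mem := fun _ h => (extIdSet A).neg_mem h
  mul_mem_left := fun r _ h => extIdSet_mul_left hcen hA h r
  mul_mem_right := fun r _ h => extIdSet_mul_right h r

lemma extIdSet_smul_subset {A : Set S} (hstabA : ∀ g : G, g • A = A) (g : G) :
    g • (extIdSet A : Set S) ⊆ (extIdSet A : Set S) := by
  rintro _ ⟨x, hx, rfl⟩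
  induction hx using AddSubgroup.closure_induction with
  | mem y hy =>
    obtain ⟨a, ha, s, rfl⟩ := hy
    show g • (a * s) ∈ _
    rw [smul_mul']
    have : g • a ∈ A := by
      rw [← hstabA g]; exact Set.smul_mem_smul_set ha
    exact extIdSet_gen this _
  | zero => simpa using (extIdSet A).zero_mem
  | add y z _ _ hy hz =>
    show g • (y + z) ∈ _
    rw [smul_add]; exact (extIdSet A).add_mem hy hz
  | neg y _ hy =>
    show g • (-y) ∈ _
    rw [smul_neg]; exact (extIdSet A).neg_mem hy

lemma extIdSet_smul {A : Set S} (hstabA : ∀ g : G, g • A = A) (g : G) :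
    g • (extIdSet A : Set S) = (extIdSet A : Set S) := by
  apply subset_antisymm (extIdSet_smul_subset hstabA g)
  intro x hx
  refine ⟨g⁻¹ • x, extIdSet_smul_subset hstabA g⁻¹ (Set.smul_mem_smul_set hx), ?_⟩
  simp

lemma extIdSet_mul_mem {R' : Subring S}
    (hcen : ∀ s : S, s ∈ AddSubgroup.closure
      {x : S | ∃ r ∈ R', ∃ c ∈ Subring.centralizer (R' : Set S), x = r * c})
    {I A B : Set S} (hIi : IsTwoSidedIdealSet S I)
    (hA : IsTIof R' A) (hB : IsTIof R' B)
    (hAB : ∀ a ∈ A, ∀ b ∈ B, a * b ∈ I ∩ (R' : Set S)) :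
    ∀ x ∈ extIdSet A, ∀ y ∈ extIdSet B, x * y ∈ I := by
  intro x hx
  induction hx using AddSubgroup.closure_induction with
  | mem x' hx' =>
    obtain ⟨a, ha, s, rfl⟩ := hx'
    intro y hy
    induction hy using AddSubgroup.closure_induction with
    | mem y' hy' =>
      obtain ⟨b, hb, t, rfl⟩ := hy'
      have hs := hcen s
      induction hs using AddSubgroup.closure_induction with
      | mem u hu =>
        obtain ⟨r, hr, c, hc, rfl⟩ := hu
        have hcb : c * b = b * c :=
          (Subring.mem_centralizer_iff.mp hc b (hB.1 hb)).symm
        have heq : a * (r * c) * (b * t) = ((a * r) * b) * (c * t) := by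
          simp only [mul_assoc]
          rw [← mul_assoc c b t, hcb, mul_assoc]
        rw [heq]
        exact hIi.mul_mem_right _ (hAB _ ((hA.2.2.2.2 r hr a ha).2) _ hb).1
      | zero => simpa using hIi.zero_mem
      | add u v _ _ hu hv =>
        have : a * (u + v) * (b * t) = a * u * (b * t) + a * v * (b * t) := by rw [mul_add, add_mul]
        rw [this]; exact hIi.add_mem hu hv
      | neg u _ hu =>
        have : a * (-u) * (b * t) = -(a * u * (b * t)) := by rw [mul_neg, neg_mul]
        rw [this]; exact hIi.neg_mem hu
    | zero => simpa using hIi.zero_mem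
    | add y z _ _ hy hz => rw [mul_add]; exact hIi.add_mem hy hz
    | neg y _ hy => rw [mul_neg]; exact hIi.neg_mem hy
  | zero =>
    intro y hy; simpa using hIi.zero_mem
  | add x x' _ _ hx hx' =>
    intro y hy; rw [add_mul]; exact hIi.add_mem (hx y hy) (hx' y hy)
  | neg x _ hx =>
    intro y hy; rw [neg_mul]; exact hIi.neg_mem (hx y hy)

end Aux

/-- let `R ⊆ S` be a centralizing ring extension and let `G` act by
ring automorphisms on `S` stabilizing `R`.  If `I` is a `G`-prime ideal of `S`,
then `I ∩ R` is a `G`-prime ideal of `R`. -/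
theorem contraction_gPrime_of_centralizing {G S : Type*} [Group G] [Ring S]
    [MulSemiringAction G S] (R' : Subring S)
    (hcen : ∀ s : S, s ∈ AddSubgroup.closure
      {x : S | ∃ r ∈ R', ∃ c ∈ Subring.centralizer (R' : Set S), x = r * c})
    (hstab : ∀ g : G, g • (R' : Set S) = (R' : Set S))
    (I : Set S) (hI : IsGPrime G S I) :
    IsGPrimeOf G R' (I ∩ (R' : Set S)) := by
  obtain ⟨hIi, hIne, hIst, hIpr⟩ := hI
  have h1I : (1 : S) ∉ I := by
    intro h1
    apply hIne
    ext s
    simp only [Set.mem_univ, iff_true]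
    simpa using hIi.mul_mem_left s h1
  refine ⟨⟨Set.inter_subset_right, ⟨hIi.zero_mem, R'.zero_mem⟩,
      fun a ha b hb => ⟨hIi.add_mem ha.1 hb.1, R'.add_mem ha.2 hb.2⟩,
      fun a ha => ⟨hIi.neg_mem ha.1, R'.neg_mem ha.2⟩,
      fun r hr a ha => ⟨⟨hIi.mul_mem_left r ha.1, R'.mul_mem hr ha.2⟩,
        ⟨hIi.mul_mem_right r ha.1, R'.mul_mem ha.2 hr⟩⟩⟩, ?_, ?_, ?_⟩
  · intro h
    have : (1 : S) ∈ I ∩ (R' : Set S) := by rw [h]; exact R'.one_mem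
    exact h1I this.1
  · intro g
    rw [Set.smul_set_inter, hIst g, hstab g]
  · intro A B hA hB hAst hBst hABmem
    have key := hIpr (extIdSet A) (extIdSet B)
      (extIdSet_isTwoSided hcen hA) (extIdSet_isTwoSided hcen hB)
      (extIdSet_smul hAst) (extIdSet_smul hBst)
      (extIdSet_mul_mem hcen hIi hA hB hABmem)
    rcases key with h | h
    · exact Or.inl fun a ha => ⟨h (subset_extIdSet ha), hA.1 ha⟩
    · exact Or.inr fun b hb => ⟨h (subset_extIdSet hb), hB.1 hb⟩
end
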